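/- Every metric space on n points whose pairwise distances are all distinct admits a monotone embedding into n-dimensional Euclidean space: there exists φ : X → ℝⁿ such that δ(x,y) < δ(w,z) if and only if ‖φ(x)−φ(y)‖₂ < ‖φ(w)−φ(z)‖₂. In fact, it suffices that the map realizes any prescribed linear order on distances. -/

import Mathlib

/-- Every metric on `n` points with all pairwise distances distinct admits a
monotone embedding into `n`-dimensional Euclidean space. -/
theorem stmt_1 (n : ℕ) (δ : Fin n → Fin n → ℝ)
    (hzero : ∀ x, δ x x = 0)
    (hsymm : ∀ x y, δ x y = δ y x)
    (hpos : ∀ x y, x ≠ y → 0 < δ x y)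
    (htri : ∀ x y z, δ x z ≤ δ x y + δ y z)
    (hdist : ∀ x y w z : Fin n, x ≠ y → w ≠ z → s(x, y) ≠ s(w, z) → δ x y ≠ δ w z) :
    ∃ φ : Fin n → EuclideanSpace ℝ (Fin n),
      ∀ x y w z : Fin n, δ x y < δ w z ↔ ‖φ x - φ y‖ < ‖φ w - φ z‖ := by
  rcases Nat.eq_zero_or_pos n with hn | hn
  · subst hn; exact ⟨fun x => 0, fun x => x.elim0⟩
  have hn1 : (1 : ℝ) ≤ n := by exact_mod_cast hn
  have hδnn : ∀ x y, 0 ≤ δ x y := by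
    intro x y
    rcases eq_or_ne x y with h | h
    · simp [h, hzero]
    · exact (hpos x y h).le
  set T : ℝ := 1 + ∑ i, ∑ j, δ i j with hT
  have hTge : 1 ≤ T := by
    have : 0 ≤ ∑ i, ∑ j, δ i j :=
      Finset.sum_nonneg fun i _ => Finset.sum_nonneg fun j _ => hδnn i j
    simp only [hT]; linarith
  have hTpos : 0 < T := by linarith
  have hnT : 0 < (n : ℝ) * T := by positivity
  set c : ℝ := 1 / ((n : ℝ) * T) with hc
  have hcpos : 0 < c := by positivity
  set A : Matrix (Fin n) (Fin n) ℝ := Matrix.of fun i j => (if i = j then 1 else 0) - c * δ i j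
    with hA
  have hrow : ∀ i, ∑ j, c * δ i j ≤ 1 := by
    intro i
    have h1 : ∑ j, δ i j ≤ T := by
      have : ∑ j, δ i j ≤ ∑ i', ∑ j, δ i' j :=
        Finset.single_le_sum (fun i' _ => Finset.sum_nonneg fun j _ => hδnn i' j)
          (Finset.mem_univ i)
      simp only [hT]; linarith
    calc ∑ j, c * δ i j = c * ∑ j, δ i j := by rw [Finset.mul_sum]
      _ ≤ c * T := by nlinarith [Finset.sum_nonneg fun j (_ : j ∈ Finset.univ) => hδnn i j]
      _ ≤ 1 := by
          rw [hc, div_mul_eq_mul_div, one_mul, div_le_one hnT]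
          nlinarith
  have hPSD : A.PosSemidef := by
    refine Matrix.posSemidef_iff_dotProduct_mulVec.mpr ⟨?_, ?_⟩
    · ext i j
      simp only [Matrix.conjTranspose_apply, hA, Matrix.of_apply, star_trivial]
      rw [hsymm j i]
      congr 1
      simp [eq_comm]
    · intro x
      have hdot : dotProduct (star x) (A.mulVec x)
          = ∑ i, x i * x i - ∑ i, ∑ j, c * δ i j * (x i * x j) := by
        simp only [dotProduct, Matrix.mulVec, dotProduct, Pi.star_apply,
          star_trivial, hA, Matrix.of_apply]
        rw [← Finset.sum_sub_distrib]
        refine Finset.sum_congr rfl fun i _ => ?_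
        rw [Finset.mul_sum]
        have hterm : ∀ j, x i * (((if i = j then 1 else 0) - c * δ i j) * x j)
            = x i * (((if i = j then 1 else 0) : ℝ) * x j) - c * δ i j * (x i * x j) :=
          fun j => by ring
        rw [Finset.sum_congr rfl fun j _ => hterm j, Finset.sum_sub_distrib]
        congr 1
        simp [mul_ite, Finset.sum_ite_eq]
      rw [hdot]
      have step1 : ∑ i, ∑ j, c * δ i j * (x i * x j)
          ≤ ∑ i, ∑ j, c * δ i j * ((x i ^ 2 + x j ^ 2) / 2) := by
        refine Finset.sum_le_sum fun i _ => Finset.sum_le_sum fun j _ => ?_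
        have h1 : 0 ≤ c * δ i j := mul_nonneg hcpos.le (hδnn i j)
        nlinarith [sq_nonneg (x i - x j)]
      have split : ∑ i, ∑ j, c * δ i j * ((x i ^ 2 + x j ^ 2) / 2)
          = (∑ i, ∑ j, c * δ i j * x i ^ 2) / 2 + (∑ i, ∑ j, c * δ i j * x j ^ 2) / 2 := by
        rw [Finset.sum_div, Finset.sum_div, ← Finset.sum_add_distrib]
        refine Finset.sum_congr rfl fun i _ => ?_
        rw [Finset.sum_div, Finset.sum_div, ← Finset.sum_add_distrib]
        refine Finset.sum_congr rfl fun j _ => ?_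
        ring
      have swap : ∑ i, ∑ j, c * δ i j * x j ^ 2 = ∑ i, ∑ j, c * δ i j * x i ^ 2 := by
        rw [Finset.sum_comm]
        exact Finset.sum_congr rfl fun a _ => Finset.sum_congr rfl fun b _ => by rw [hsymm]
      have step2 : ∑ i, ∑ j, c * δ i j * x i ^ 2 ≤ ∑ i, x i * x i := by
        refine Finset.sum_le_sum fun i _ => ?_
        calc ∑ j, c * δ i j * x i ^ 2 = (∑ j, c * δ i j) * x i ^ 2 := by
              rw [Finset.sum_mul]
          _ ≤ 1 * x i ^ 2 := by
              exact mul_le_mul_of_nonneg_right (hrow i) (sq_nonneg _)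
          _ = x i * x i := by ring
      linarith [step1, split, swap, step2]
  obtain ⟨B, hB⟩ : ∃ B : Matrix (Fin n) (Fin n) ℝ, A = Matrix.conjTranspose B * B := by
    open scoped MatrixOrder in
    exact ⟨CFC.sqrt A, by
      have h0 : 0 ≤ A := Matrix.nonneg_iff_posSemidef.mpr hPSD
      rw [← Matrix.star_eq_conjTranspose, (IsSelfAdjoint.of_nonneg (CFC.sqrt_nonneg A)).star_eq]
      exact (CFC.sqrt_mul_sqrt_self A h0).symm⟩
  have hG : ∀ i j, ∑ k, B k i * B k j = A i j := by
    intro i j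
    rw [hB]
    simp [Matrix.mul_apply, Matrix.conjTranspose_apply]
  set φ : Fin n → EuclideanSpace ℝ (Fin n) := fun i => WithLp.toLp 2 (fun k => B k i) with hφ
  have hsq : ∀ x y : Fin n, ‖φ x - φ y‖ ^ 2
      = (if x = y then 0 else 2) + 2 * (c * δ x y) := by
    intro x y
    have hns : ‖φ x - φ y‖ ^ 2 = ∑ k, (B k x - B k y) ^ 2 := by
      rw [EuclideanSpace.norm_eq, Real.sq_sqrt (Finset.sum_nonneg fun k _ => sq_nonneg _)]
      refine Finset.sum_congr rfl fun k _ => ?_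
      simp [hφ, PiLp.sub_apply, Real.norm_eq_abs, sq_abs]
    have expand : ∑ k, (B k x - B k y) ^ 2
        = (∑ k, B k x * B k x) - 2 * (∑ k, B k x * B k y) + ∑ k, B k y * B k y := by
      rw [Finset.mul_sum, ← Finset.sum_sub_distrib, ← Finset.sum_add_distrib]
      refine Finset.sum_congr rfl fun k _ => ?_
      ring
    rw [hns, expand, hG, hG, hG]
    simp only [hA, Matrix.of_apply, if_pos rfl, hzero]
    rcases eq_or_ne x y with h | h
    · subst h
      simp [hzero]
      norm_num
    · simp only [if_neg h]
      simp
      ring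
  have hnn : ∀ x y : Fin n, 0 ≤ ‖φ x - φ y‖ := fun x y => norm_nonneg _
  refine ⟨φ, fun x y w z => ?_⟩
  have key : ∀ a b c' d : Fin n, δ a b < δ c' d → ‖φ a - φ b‖ < ‖φ c' - φ d‖ := by
    intro a b c' d hlt
    have hsq2 : ‖φ a - φ b‖ ^ 2 < ‖φ c' - φ d‖ ^ 2 := by
      rw [hsq, hsq]
      have hne : c' ≠ d := by
        intro h; rw [h, hzero] at hlt; exact absurd hlt (not_lt.mpr (hδnn a b))
      rcases eq_or_ne a b with h | h
      · simp only [if_pos h, if_neg hne]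
        have hab : δ a b = 0 := by rw [h, hzero]
        nlinarith [mul_nonneg hcpos.le (hδnn c' d)]
      · simp only [if_neg h, if_neg hne]
        nlinarith
    exact lt_of_pow_lt_pow_left₀ 2 (hnn c' d) hsq2
  constructor
  · exact key x y w z
  · intro hlt
    rcases lt_trichotomy (δ x y) (δ w z) with h | h | h
    · exact h
    · exfalso
      have hx : (x = y) ↔ (w = z) := by
        constructor
        · intro hxy
          by_contra hwz
          have hp := hpos w z hwz
          rw [← h, hxy, hzero] at hp
          exact lt_irrefl _ hp
        · intro hwz
          by_contra hxy
          have hp := hpos x y hxy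
          rw [h, hwz, hzero] at hp
          exact lt_irrefl _ hp
      have heq2 : ‖φ x - φ y‖ ^ 2 = ‖φ w - φ z‖ ^ 2 := by
        rw [hsq, hsq, h]
        rcases eq_or_ne x y with hxy | hxy
        · rw [if_pos hxy, if_pos (hx.mp hxy)]
        · rw [if_neg hxy, if_neg fun hwz => hxy (hx.mpr hwz)]
      nlinarith [hnn x y, hnn w z]
    · exact absurd (key w z x y h) (not_lt.mpr hlt.le)
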